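/- In the polynomial ring A = F[v,w,x,y,z] over a field F, let a = (vx, wx, vz - wy) be the ideal of 2×2 minors of the matrix with rows (0, v, w) and (x, y, z). Set f = wx^2 + z(vz - wy) and g = vx^2 + y(vz - wy). Then vf - wg = (vz - wy)^2, and the ideal a equals the radical of the ideal (f, g); in particular, each of vx, wx, vz - wy has a power lying in (f, g). -/

import Mathlib

open MvPolynomial

noncomputable section Stmt17

namespace Stmt17

variable (F : Type*) [Field F]

/-- The indeterminates `v, w, x, y, z` of `F[v,w,x,y,z]`. -/
def v : MvPolynomial (Fin 5) F := X 0
def w : MvPolynomial (Fin 5) F := X 1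
def x : MvPolynomial (Fin 5) F := X 2
def y : MvPolynomial (Fin 5) F := X 3
def z : MvPolynomial (Fin 5) F := X 4

/-- `f = wx² + z(vz - wy)`. -/
def f : MvPolynomial (Fin 5) F := w F * (x F) ^ 2 + z F * (v F * z F - w F * y F)

/-- `g = vx² + y(vz - wy)`. -/
def g : MvPolynomial (Fin 5) F := v F * (x F) ^ 2 + y F * (v F * z F - w F * y F)

section Aux

variable {F}

/-- Substitution lemma: `p - p(g₀,…,gₙ₋₁)` lies in any ideal containing all `Xᵢ - gᵢ`. -/
lemma sub_aeval_mem {n : ℕ} (I : Ideal (MvPolynomial (Fin n) F))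
    (gv : Fin n → MvPolynomial (Fin n) F) (hg : ∀ i, X i - gv i ∈ I)
    (p : MvPolynomial (Fin n) F) : p - aeval gv p ∈ I := by
  induction p using MvPolynomial.induction_on with
  | C a => simpa using I.zero_mem
  | add p q hp hq =>
      have h := I.add_mem hp hq
      rw [map_add]
      convert h using 1
      ring
  | mul_X p i hp =>
      rw [map_mul, aeval_X]
      have h1 : p * X i - aeval gv p * gv i
          = (p - aeval gv p) * X i + aeval gv p * (X i - gv i) := by ring
      rw [h1]
      exact I.add_mem (I.mul_mem_right _ hp) (I.mul_mem_left _ (hg i))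

/-- `vz - wy` (here in `F[X₀,X₁,X₂,X₃]` as `X₀X₃ - X₁X₂`) is a prime element. -/
lemma prime_q4 : Prime (X 0 * X 3 - X 1 * X 2 : MvPolynomial (Fin 4) F) := by
  classical
  set S := MvPolynomial (Fin 3) F with hS
  set P : Polynomial S := Polynomial.C (X 2 : S) * Polynomial.X - Polynomial.C (X 0 * X 1)
    with hP
  have hEq : (finSuccEquiv F 3) (X 0 * X 3 - X 1 * X 2 : MvPolynomial (Fin 4) F) = P := by
    have e1 : ((0 : Fin 3).succ) = (1 : Fin 4) := by decide
    have e2 : ((1 : Fin 3).succ) = (2 : Fin 4) := by decide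
    have e3 : ((2 : Fin 3).succ) = (3 : Fin 4) := by decide
    rw [show (X 3 : MvPolynomial (Fin 4) F) = X ((2 : Fin 3).succ) by rw [e3],
        show (X 2 : MvPolynomial (Fin 4) F) = X ((1 : Fin 3).succ) by rw [e2],
        show (X 1 : MvPolynomial (Fin 4) F) = X ((0 : Fin 3).succ) by rw [e1],
        map_sub, map_mul, map_mul, finSuccEquiv_X_zero, finSuccEquiv_X_succ,
        finSuccEquiv_X_succ, finSuccEquiv_X_succ, hP, ← Polynomial.C_mul]
    ring
  -- an elementary divisibility fact used for primitivity
  have hX2 : (X 2 : S) ≠ 0 := X_ne_zero _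
  have hXdvd : ∀ r : S, r ∣ (X 2 : S) → r ∣ (X 0 * X 1 : S) → IsUnit r := by
    intro r h1 h0
    obtain ⟨s, hs⟩ := h1
    have hgv : ∀ i : Fin 3, (X i : S) - (![X 0, X 1, 0] : Fin 3 → S) i
        ∈ Ideal.span {(X 2 : S)} := by
      intro i
      fin_cases i <;> simp [Ideal.mem_span_singleton_self]
    have h2 : (0 : S) = aeval ![X 0, X 1, 0] r * aeval ![X 0, X 1, 0] s := by
      have := congrArg (aeval (![X 0, X 1, 0] : Fin 3 → S)) hs
      rw [map_mul, aeval_X] at this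
      rw [← this]; simp
    rcases mul_eq_zero.mp h2.symm with hr0 | hs0
    · exfalso
      have hrX : (X 2 : S) ∣ r := by
        have h3 := sub_aeval_mem (Ideal.span {(X 2 : S)}) ![X 0, X 1, 0] hgv r
        rw [hr0, sub_zero] at h3
        exact Ideal.mem_span_singleton.mp h3
      obtain ⟨m, hm⟩ := hrX.trans h0
      have := congrArg (eval (![1, 1, 0] : Fin 3 → F)) hm
      simp at this
    · have hsX : (X 2 : S) ∣ s := by
        have h3 := sub_aeval_mem (Ideal.span {(X 2 : S)}) ![X 0, X 1, 0] hgv s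
        rw [hs0, sub_zero] at h3
        exact Ideal.mem_span_singleton.mp h3
      obtain ⟨u, hu⟩ := hsX
      rw [hu] at hs
      have hcan : (X 2 : S) * 1 = X 2 * (r * u) := by linear_combination hs
      have h1' := mul_left_cancel₀ hX2 hcan
      exact IsUnit.of_mul_eq_one u h1'.symm
  have hprim : P.IsPrimitive := by
    intro r hr
    rw [Polynomial.C_dvd_iff_dvd_coeff] at hr
    have h1 : r ∣ (X 2 : S) := by
      have := hr 1
      simpa [hP, Polynomial.coeff_C] using this
    have h0 : r ∣ (X 0 * X 1 : S) := by
      have := hr 0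
      simp only [hP, Polynomial.coeff_sub, Polynomial.coeff_C_mul, Polynomial.coeff_X_zero,
        mul_zero, Polynomial.coeff_C_zero, zero_sub, dvd_neg] at this
      exact dvd_neg.mp this
    exact hXdvd r h1 h0
  letI : StrongNormalizationMonoid S := UniqueFactorizationMonoid.normalizationMonoid
  letI : NormalizedGCDMonoid S := UniqueFactorizationMonoid.toNormalizedGCDMonoid S
  have hIrr : Irreducible P := by
    rw [hprim.irreducible_iff_irreducible_map_fraction_map (K := FractionRing S)]
    set K := FractionRing S
    set a : K := algebraMap S K (X 2) with ha'
    set b : K := algebraMap S K (X 0 * X 1) with hb'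
    have ha : a ≠ 0 := by
      intro h
      apply hX2
      apply IsFractionRing.injective S K
      rw [← ha', h, map_zero]
    have hmap : P.map (algebraMap S K)
        = Polynomial.C a * (Polynomial.X - Polynomial.C (a⁻¹ * b)) := by
      rw [hP, Polynomial.map_sub, Polynomial.map_mul, Polynomial.map_C, Polynomial.map_X,
        Polynomial.map_C, mul_sub, ← Polynomial.C_mul, ← mul_assoc,
        mul_inv_cancel₀ ha, one_mul, ← ha', ← hb']
    rw [hmap]
    have hu : IsUnit (Polynomial.C a) := Polynomial.isUnit_C.mpr (isUnit_iff_ne_zero.mpr ha)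
    have hassoc : Associated (Polynomial.X - Polynomial.C (a⁻¹ * b))
        (Polynomial.C a * (Polynomial.X - Polynomial.C (a⁻¹ * b))) :=
      ⟨hu.unit, by rw [IsUnit.unit_spec, mul_comm]⟩
    exact hassoc.irreducible (Polynomial.irreducible_X_sub_C (a⁻¹ * b))
  have hPrimeP : Prime P := UniqueFactorizationMonoid.irreducible_iff_prime.mp hIrr
  have htrans : Prime ((finSuccEquiv F 3).toMulEquiv
      (X 0 * X 3 - X 1 * X 2 : MvPolynomial (Fin 4) F)) := by
    show Prime ((finSuccEquiv F 3) (X 0 * X 3 - X 1 * X 2 : MvPolynomial (Fin 4) F))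
    rw [hEq]; exact hPrimeP
  exact (MulEquiv.prime_iff (finSuccEquiv F 3).toMulEquiv).mp htrans

end Aux

/-- Killing `v` and `w`. -/
def phi : MvPolynomial (Fin 5) F →ₐ[F] MvPolynomial (Fin 3) F := aeval ![0, 0, X 0, X 1, X 2]

/-- Killing `x`. -/
def chi : MvPolynomial (Fin 5) F →ₐ[F] MvPolynomial (Fin 4) F := aeval ![X 0, X 1, 0, X 2, X 3]

/-- Section of `chi`. -/
def iot : MvPolynomial (Fin 4) F →ₐ[F] MvPolynomial (Fin 5) F := aeval ![X 0, X 1, X 3, X 4]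

/-- Section of `phi`. -/
def iot3 : MvPolynomial (Fin 3) F →ₐ[F] MvPolynomial (Fin 5) F := aeval ![X 2, X 3, X 4]

lemma ker_phi_le : RingHom.ker (phi F) ≤ Ideal.span {(X 0 : MvPolynomial (Fin 5) F), X 1} := by
  intro p hp
  have hcomp : (iot3 F).comp (phi F)
      = aeval ![(0 : MvPolynomial (Fin 5) F), 0, X 2, X 3, X 4] := by
    apply algHom_ext
    intro i
    fin_cases i <;> simp [phi, iot3]
  have hgv : ∀ i : Fin 5, (X i : MvPolynomial (Fin 5) F)
      - (![(0 : MvPolynomial (Fin 5) F), 0, X 2, X 3, X 4]) i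
      ∈ Ideal.span {(X 0 : MvPolynomial (Fin 5) F), X 1} := by
    intro i
    fin_cases i <;> simp <;>
      exact Ideal.subset_span (by simp)
  have h2 := sub_aeval_mem (Ideal.span {(X 0 : MvPolynomial (Fin 5) F), X 1})
    ![(0 : MvPolynomial (Fin 5) F), 0, X 2, X 3, X 4] hgv p
  have h3 : aeval ![(0 : MvPolynomial (Fin 5) F), 0, X 2, X 3, X 4] p
      = (iot3 F) ((phi F) p) := by rw [← hcomp]; rfl
  rw [h3, RingHom.mem_ker.mp hp, map_zero, sub_zero] at h2
  exact h2

lemma comap_chi_le :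
    Ideal.comap (chi F) (Ideal.span {(X 0 * X 3 - X 1 * X 2 : MvPolynomial (Fin 4) F)})
      ≤ Ideal.span {(X 2 : MvPolynomial (Fin 5) F), X 0 * X 4 - X 1 * X 3} := by
  intro p hp
  rw [Ideal.mem_comap, Ideal.mem_span_singleton] at hp
  obtain ⟨t, ht⟩ := hp
  have hcomp : (iot F).comp (chi F)
      = aeval ![(X 0 : MvPolynomial (Fin 5) F), X 1, 0, X 3, X 4] := by
    apply algHom_ext
    intro i
    fin_cases i <;> simp [chi, iot]
  have hgv : ∀ i : Fin 5, (X i : MvPolynomial (Fin 5) F)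
      - (![(X 0 : MvPolynomial (Fin 5) F), X 1, 0, X 3, X 4]) i
      ∈ Ideal.span {(X 2 : MvPolynomial (Fin 5) F), X 0 * X 4 - X 1 * X 3} := by
    intro i
    fin_cases i <;> simp <;>
      exact Ideal.subset_span (by simp)
  have h2 := sub_aeval_mem
    (Ideal.span {(X 2 : MvPolynomial (Fin 5) F), X 0 * X 4 - X 1 * X 3})
    ![(X 0 : MvPolynomial (Fin 5) F), X 1, 0, X 3, X 4] hgv p
  have h3 : aeval ![(X 0 : MvPolynomial (Fin 5) F), X 1, 0, X 3, X 4] p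
      = (iot F) ((chi F) p) := by rw [← hcomp]; rfl
  have h4 : (iot F) (X 0 * X 3 - X 1 * X 2) = X 0 * X 4 - X 1 * X 3 := by
    simp [iot]
  rw [h3, ht, map_mul, h4] at h2
  have h5 := Ideal.add_mem _ h2
    (Ideal.mul_mem_right ((iot F) t) _ (Ideal.subset_span
      (Set.mem_insert_iff.mpr (Or.inr rfl))))
  simpa using h5

/-- In `A = F[v,w,x,y,z]`, for the ideal `a = (vx, wx, vz - wy)` of 2×2 minors of the
matrix with rows `(0,v,w)` and `(x,y,z)`: one has `vf - wg = (vz - wy)²`, the ideal `a`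
is the radical of `(f,g)`, and in particular each generator of `a` has a power in
`(f,g)`. -/
theorem ara_two (F : Type*) [Field F] :
    v F * f F - w F * g F = (v F * z F - w F * y F) ^ 2 ∧
    Ideal.span {v F * x F, w F * x F, v F * z F - w F * y F} =
      (Ideal.span {f F, g F} : Ideal (MvPolynomial (Fin 5) F)).radical ∧
    ∀ h ∈ ({v F * x F, w F * x F, v F * z F - w F * y F} : Set (MvPolynomial (Fin 5) F)),
      ∃ n : ℕ, h ^ n ∈ Ideal.span {f F, g F} := by
  simp only [v, w, x, y, z, f, g]
  -- notation
  set q : MvPolynomial (Fin 5) F := X 0 * X 4 - X 1 * X 3 with hq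
  set ff : MvPolynomial (Fin 5) F := X 1 * X 2 ^ 2 + X 4 * (X 0 * X 4 - X 1 * X 3) with hff
  set gg : MvPolynomial (Fin 5) F := X 0 * X 2 ^ 2 + X 3 * (X 0 * X 4 - X 1 * X 3) with hgg
  -- power memberships
  have hq2 : q ^ 2 ∈ Ideal.span {ff, gg} :=
    Ideal.mem_span_pair.mpr ⟨X 0, -(X 1), by rw [hq, hff, hgg]; ring⟩
  have hvx : (X 0 * X 2 : MvPolynomial (Fin 5) F) ^ 4 ∈ Ideal.span {ff, gg} :=
    Ideal.mem_span_pair.mpr ⟨(X 0) ^ 3 * (X 3) ^ 2,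
      (X 0) ^ 2 * gg - 2 * (X 0) ^ 2 * X 3 * q - X 1 * (X 0) ^ 2 * (X 3) ^ 2, by
        rw [hq, hff, hgg]; ring⟩
  have hwx : (X 1 * X 2 : MvPolynomial (Fin 5) F) ^ 4 ∈ Ideal.span {ff, gg} :=
    Ideal.mem_span_pair.mpr ⟨(X 1) ^ 2 * ff - 2 * (X 1) ^ 2 * X 4 * q
        + X 0 * (X 1) ^ 2 * (X 4) ^ 2, -((X 1) ^ 3 * (X 4) ^ 2), by
        rw [hq, hff, hgg]; ring⟩
  refine ⟨by rw [hq]; ring, ?_, ?_⟩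
  · -- radical equality
    apply le_antisymm
    · rw [Ideal.span_le]
      rintro s hs
      simp only [Set.mem_insert_iff, Set.mem_singleton_iff] at hs
      rcases hs with rfl | rfl | rfl
      · exact Ideal.mem_radical_of_pow_mem (Ideal.le_radical hvx)
      · exact Ideal.mem_radical_of_pow_mem (Ideal.le_radical hwx)
      · exact Ideal.mem_radical_of_pow_mem (Ideal.le_radical hq2)
    · -- radical (ff, gg) ≤ a
      have hfg_le : Ideal.span {ff, gg}
          ≤ Ideal.span {(X 0 * X 2 : MvPolynomial (Fin 5) F), X 1 * X 2, q} := by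
        rw [Ideal.span_le]
        rintro s hs
        simp only [Set.mem_insert_iff, Set.mem_singleton_iff] at hs
        rcases hs with rfl | rfl
        · have h : ff = X 2 * (X 1 * X 2) + X 4 * q := by rw [hff, hq]; ring
          rw [h]
          exact Ideal.add_mem _
            (Ideal.mul_mem_left _ _ (Ideal.subset_span (by simp)))
            (Ideal.mul_mem_left _ _ (Ideal.subset_span (by simp)))
        · have h : gg = X 2 * (X 0 * X 2) + X 3 * q := by rw [hgg, hq]; ring
          rw [h]
          exact Ideal.add_mem _
            (Ideal.mul_mem_left _ _ (Ideal.subset_span (by simp)))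
            (Ideal.mul_mem_left _ _ (Ideal.subset_span (by simp)))
      refine (Ideal.radical_mono hfg_le).trans ?_
      -- radical of a is contained in a
      intro p hp
      have hkerprime : (RingHom.ker (phi F)).IsPrime := RingHom.ker_isPrime _
      have hq4prime : (Ideal.span
          {(X 0 * X 3 - X 1 * X 2 : MvPolynomial (Fin 4) F)}).IsPrime :=
        (Ideal.span_singleton_prime (prime_q4).ne_zero).mpr prime_q4
      have hcomapprime : (Ideal.comap (chi F) (Ideal.span
          {(X 0 * X 3 - X 1 * X 2 : MvPolynomial (Fin 4) F)})).IsPrime :=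
        Ideal.IsPrime.comap _
      have hA1 : Ideal.span {(X 0 * X 2 : MvPolynomial (Fin 5) F), X 1 * X 2, q}
          ≤ RingHom.ker (phi F) := by
        rw [Ideal.span_le]
        rintro s hs
        simp only [Set.mem_insert_iff, Set.mem_singleton_iff] at hs
        rcases hs with rfl | rfl | rfl <;>
          · rw [SetLike.mem_coe, RingHom.mem_ker]
            simp [phi, hq]
      have hA2 : Ideal.span {(X 0 * X 2 : MvPolynomial (Fin 5) F), X 1 * X 2, q}
          ≤ Ideal.comap (chi F) (Ideal.span
            {(X 0 * X 3 - X 1 * X 2 : MvPolynomial (Fin 4) F)}) := by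
        rw [Ideal.span_le]
        rintro s hs
        simp only [Set.mem_insert_iff, Set.mem_singleton_iff] at hs
        rcases hs with rfl | rfl | rfl <;>
          · rw [SetLike.mem_coe, Ideal.mem_comap]
            rw [Ideal.mem_span_singleton]
            simp only [hq, map_sub, map_mul, chi, aeval_X]
            simp
      have hK1 : p ∈ RingHom.ker (phi F) :=
        (hkerprime.radical_le_iff.mpr hA1) hp
      have hK2 : p ∈ Ideal.comap (chi F) (Ideal.span
          {(X 0 * X 3 - X 1 * X 2 : MvPolynomial (Fin 4) F)}) :=
        (hcomapprime.radical_le_iff.mpr hA2) hp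
      have hp1 : p ∈ Ideal.span {(X 0 : MvPolynomial (Fin 5) F), X 1} := ker_phi_le F hK1
      have hp2 : p ∈ Ideal.span {(X 2 : MvPolynomial (Fin 5) F), X 0 * X 4 - X 1 * X 3} :=
        comap_chi_le F hK2
      obtain ⟨c, d, hcd⟩ := Ideal.mem_span_pair.mp hp2
      have hq5ker : (phi F) (X 0 * X 4 - X 1 * X 3) = 0 := by simp [phi]
      have hcx : (phi F) (c * X 2) = 0 := by
        have h := congrArg (phi F) hcd
        rw [map_add, map_mul, map_mul, hq5ker, mul_zero, add_zero] at h
        rw [map_mul, h]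
        exact RingHom.mem_ker.mp hK1
      have hc : c ∈ RingHom.ker (phi F) := by
        rcases hkerprime.mem_or_mem (RingHom.mem_ker.mpr hcx) with h | h
        · exact h
        · exfalso
          have : (phi F) (X 2) = X 0 := by simp [phi]
          rw [RingHom.mem_ker, this] at h
          exact X_ne_zero _ h
      obtain ⟨α, β, hab⟩ := Ideal.mem_span_pair.mp (ker_phi_le F hc)
      have hfinal : p = α * (X 0 * X 2) + β * (X 1 * X 2) + d * q := by
        rw [hq]
        linear_combination (-1 : MvPolynomial (Fin 5) F) * hcd - X 2 * hab
      rw [hfinal]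
      refine Ideal.add_mem _ (Ideal.add_mem _ ?_ ?_) ?_
      · exact Ideal.mul_mem_left _ _ (Ideal.subset_span (by simp))
      · exact Ideal.mul_mem_left _ _ (Ideal.subset_span (by simp))
      · exact Ideal.mul_mem_left _ _ (Ideal.subset_span (by simp))
  · -- powers of generators
    intro h hh
    simp only [Set.mem_insert_iff, Set.mem_singleton_iff] at hh
    rcases hh with rfl | rfl | rfl
    · exact ⟨4, hvx⟩
    · exact ⟨4, hwx⟩
    · exact ⟨2, hq2⟩

end Stmt17

end Stmt17
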